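/- For distributions P_L indexed by L ~ μ on a finite set X, any D, Q, and ε, τ > 0: Pr_{L~μ}[d_TV(P_L,D) < ε] ≤ max{ frac(μ,Q,τ), Pr_{L~μ}[d_TV(P_L,Q) ≤ 2ε+τ] }, where frac(μ,Q,τ) := sup_{φ:X→[−1,1]} Pr_{L~μ}[|E_{P_L}[φ]−E_Q[φ]| ≥ τ]. -/
import Mathlib


open Finset MeasureTheory

/-- Total variation distance between distributions on a finite set. -/
noncomputable def dTV {X : Type*} [Fintype X] (P Q : X → ℝ) : ℝ :=
  (1 / 2) * ∑ x, |P x - Q x|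

lemma dTV_triangle {X : Type*} [Fintype X] (P R Q : X → ℝ) :
    dTV P Q ≤ dTV P R + dTV R Q := by
  unfold dTV
  rw [← mul_add, ← Finset.sum_add_distrib]
  have : ∑ x, |P x - Q x| ≤ ∑ x, (|P x - R x| + |R x - Q x|) := by
    apply Finset.sum_le_sum
    intro x _
    calc |P x - Q x| = |(P x - R x) + (R x - Q x)| := by ring_nf
    _ ≤ |P x - R x| + |R x - Q x| := abs_add_le _ _
  linarith

lemma sum_abs_bound {X : Type*} [Fintype X] (φ P Q : X → ℝ) (hφ : ∀ x, |φ x| ≤ 1) :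
    |∑ x, φ x * P x - ∑ x, φ x * Q x| ≤ 2 * dTV P Q := by
  unfold dTV
  rw [← Finset.sum_sub_distrib]
  calc |∑ x, (φ x * P x - φ x * Q x)| ≤ ∑ x, |φ x * P x - φ x * Q x| :=
        Finset.abs_sum_le_sum_abs _ _
  _ ≤ ∑ x, |P x - Q x| := by
      apply Finset.sum_le_sum
      intro x _
      rw [← mul_sub, abs_mul]
      calc |φ x| * |P x - Q x| ≤ 1 * |P x - Q x| :=
            mul_le_mul_of_nonneg_right (hφ x) (abs_nonneg _)
      _ = |P x - Q x| := one_mul _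
  _ = 2 * ((1/2) * ∑ x, |P x - Q x|) := by ring

/-- **controlling the heaviest `ε`-ball.** For distributions `P_L`
indexed by `L ∼ μ` on a finite set `X`, any distributions `D, Q`, and `ε, τ > 0`:
`Pr_{L∼μ}[d_TV(P_L,D) < ε]
  ≤ max { frac(μ,Q,τ), Pr_{L∼μ}[d_TV(P_L,Q) ≤ 2ε+τ] }`,
where `frac(μ,Q,τ) := sup_{φ : X→[−1,1]} Pr_{L∼μ}[|E_{P_L}[φ] − E_Q[φ]| ≥ τ]`. -/
theorem heaviest_ball_weight_bound
    {X : Type*} [Fintype X] {Ω : Type*} [MeasurableSpace Ω]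
    (μ : Measure Ω) [IsProbabilityMeasure μ]
    (P : Ω → X → ℝ) (Q D : X → ℝ)
    (hP0 : ∀ ω x, 0 ≤ P ω x) (hP1 : ∀ ω, ∑ x, P ω x = 1)
    (hQ0 : ∀ x, 0 ≤ Q x) (hQ1 : ∑ x, Q x = 1)
    (hD0 : ∀ x, 0 ≤ D x) (hD1 : ∑ x, D x = 1)
    (ε τ : ℝ) (hε : 0 < ε) (hτ : 0 < τ) :
    μ {ω | dTV (P ω) D < ε}
      ≤ max
          (⨆ φ : {φ : X → ℝ // ∀ x, |φ x| ≤ 1},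
            μ {ω | τ ≤ |∑ x, φ.1 x * P ω x - ∑ x, φ.1 x * Q x|})
          (μ {ω | dTV (P ω) Q ≤ 2 * ε + τ}) := by
  by_cases h : dTV D Q ≤ ε + τ
  · refine le_trans (measure_mono ?_) (le_max_right _ _)
    intro ω hω
    simp only [Set.mem_setOf_eq] at hω ⊢
    have := dTV_triangle (P ω) D Q
    linarith
  · push_neg at h
    refine le_trans ?_ (le_max_left _ _)
    set φ : X → ℝ := fun x => if Q x ≤ D x then 1 else -1 with hφdef
    have hφ : ∀ x, |φ x| ≤ 1 := by
      intro x
      simp only [hφdef]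
      split <;> simp
    have key : ∑ x, φ x * D x - ∑ x, φ x * Q x = 2 * dTV D Q := by
      unfold dTV
      rw [← Finset.sum_sub_distrib]
      have hc : ∀ x ∈ Finset.univ, φ x * D x - φ x * Q x = |D x - Q x| := by
        intro x _
        simp only [hφdef]
        rw [← mul_sub]
        split_ifs with hx
        · rw [one_mul, abs_of_nonneg (by linarith)]
        · push_neg at hx
          rw [neg_one_mul, abs_of_neg (by linarith)]
      rw [Finset.sum_congr rfl hc]
      ring
    refine le_trans (measure_mono ?_)
      (le_iSup (fun ψ : {φ : X → ℝ // ∀ x, |φ x| ≤ 1} =>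
        μ {ω | τ ≤ |∑ x, ψ.1 x * P ω x - ∑ x, ψ.1 x * Q x|}) ⟨φ, hφ⟩)
    intro ω hω
    simp only [Set.mem_setOf_eq] at hω ⊢
    have hbd := sum_abs_bound φ (P ω) D hφ
    have h2 : ∑ x, φ x * P ω x - ∑ x, φ x * Q x > 2 * τ := by
      have habs := abs_le.mp hbd
      linarith [habs.1, key]
    calc τ ≤ 2 * τ := by linarith
    _ ≤ ∑ x, φ x * P ω x - ∑ x, φ x * Q x := le_of_lt h2
    _ ≤ |∑ x, φ x * P ω x - ∑ x, φ x * Q x| := le_abs_self _
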